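/- Let M : k → n and N : n → m be P/T nets with boundaries, and let X, X' ∈ Multiset(P_M) and Y, Y' ∈ Multiset(P_N) be markings. Then (M;N)_{X+Y} −α/β→ (M;N)_{X'+Y'} under the strong labelled semantics if and only if there exists γ ∈ ℕ^n such that M_X −α/γ→ M_{X'} and N_Y −γ/β→ N_{Y'}. -/

import Mathlib

/-- A P/T net with boundaries `m → n` (well-formedness in `PTNet.Valid`). -/
structure PTNet (m n : ℕ) : Type 1 where
  P : Type
  T : Type
  pre : T → Multiset P
  post : T → Multiset P
  src : T → Multiset (Fin m)
  tgt : T → Multiset (Fin n)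

namespace PTNet

variable {k l m n : ℕ}

/-- Linear extension of `pre` to multisets of transitions. -/
def preM (N : PTNet m n) (U : Multiset N.T) : Multiset N.P := (U.map N.pre).sum
def postM (N : PTNet m n) (U : Multiset N.T) : Multiset N.P := (U.map N.post).sum
def srcM (N : PTNet m n) (U : Multiset N.T) : Multiset (Fin m) := (U.map N.src).sum
def tgtM (N : PTNet m n) (U : Multiset N.T) : Multiset (Fin n) := (U.map N.tgt).sum

/-- Well-formedness: finiteness and distinct footprints. -/
def Valid (N : PTNet m n) : Prop :=
  Finite N.P ∧ Finite N.T ∧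
  ∀ t u : N.T, N.pre t = N.pre u → N.post t = N.post u →
    N.src t = N.src u → N.tgt t = N.tgt u → t = u

/-- Strong firing of P/T nets: `N_X →_U N_Y`. -/
def SFire (N : PTNet m n) (X : Multiset N.P) (U : Multiset N.T)
    (Y : Multiset N.P) : Prop :=
  letI := Classical.decEq N.P
  N.preM U ≤ X ∧ N.postM U ≤ Y ∧ X - N.preM U = Y - N.postM U

/-- Weak (banking) firing of P/T nets: `N_X ⇒_U N_Y`. -/
def WFire (N : PTNet m n) (X : Multiset N.P) (U : Multiset N.T)
    (Y : Multiset N.P) : Prop :=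
  Y + N.preM U = X + N.postM U

/-- Characteristic function `χ : Multiset (Fin k) → ℕ^k`. -/
def chiM {k : ℕ} (M : Multiset (Fin k)) : Fin k → ℕ := fun i => M.count i

/-- Strong labelled semantics of P/T nets with boundaries. -/
def SLts (N : PTNet m n) (X : Multiset N.P) (α : Fin m → ℕ) (β : Fin n → ℕ)
    (Y : Multiset N.P) : Prop :=
  ∃ U : Multiset N.T, N.SFire X U Y ∧ α = chiM (N.srcM U) ∧ β = chiM (N.tgtM U)

/-- Weak labelled semantics of P/T nets with boundaries. -/
def WLts (N : PTNet m n) (X : Multiset N.P) (α : Fin m → ℕ) (β : Fin n → ℕ)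
    (Y : Multiset N.P) : Prop :=
  ∃ U : Multiset N.T, N.WFire X U Y ∧ α = chiM (N.srcM U) ∧ β = chiM (N.tgtM U)

/-- Synchronisation between P/T nets with a common boundary. -/
def Synch (M : PTNet l m) (N : PTNet m n) (U : Multiset M.T)
    (V : Multiset N.T) : Prop :=
  ¬(U = 0 ∧ V = 0) ∧ M.tgtM U = N.srcM V

/-- Minimal synchronisation. -/
def MinSynch (M : PTNet l m) (N : PTNet m n) (U : Multiset M.T)
    (V : Multiset N.T) : Prop :=
  Synch M N U V ∧
    ∀ U' V', Synch M N U' V' → U' ≤ U → V' ≤ V → U' = U ∧ V' = V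

end PTNet
namespace PTNet

variable {k l m n : ℕ}

/-- Footprints of transitions of the composite P/T net. -/
def FootprintPT (M : PTNet l m) (N : PTNet m n) : Type :=
  Multiset (M.P ⊕ N.P) × Multiset (M.P ⊕ N.P) × Multiset (Fin l) × Multiset (Fin n)

def footOf (M : PTNet l m) (N : PTNet m n) (U : Multiset M.T) (V : Multiset N.T) :
    FootprintPT M N :=
  ((M.preM U).map Sum.inl + (N.preM V).map Sum.inr,
   (M.postM U).map Sum.inl + (N.postM V).map Sum.inr,
   M.srcM U, N.tgtM V)

/-- Combined marking on a disjoint union of places. -/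
def mmk {A B : Type} (X : Multiset A) (Y : Multiset B) : Multiset (A ⊕ B) :=
  X.map Sum.inl + Y.map Sum.inr

/-- Composition of P/T nets with boundaries along a common boundary. -/
def comp (M : PTNet l m) (N : PTNet m n) : PTNet l n where
  P := M.P ⊕ N.P
  T := {fp : FootprintPT M N // ∃ U V, MinSynch M N U V ∧ footOf M N U V = fp}
  pre t := t.1.1
  post t := t.1.2.1
  src t := t.1.2.2.1
  tgt t := t.1.2.2.2

end PTNet

-- ============ auxiliary lemmas ============
namespace PTNet

variable {k l m n : ℕ}

section linadd
variable (N : PTNet m n)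

@[simp] lemma preM_zero : N.preM 0 = 0 := rfl
@[simp] lemma postM_zero : N.postM 0 = 0 := rfl
@[simp] lemma srcM_zero : N.srcM 0 = 0 := rfl
@[simp] lemma tgtM_zero : N.tgtM 0 = 0 := rfl

@[simp] lemma preM_add (U V : Multiset N.T) : N.preM (U + V) = N.preM U + N.preM V := by
  simp [preM]
@[simp] lemma postM_add (U V : Multiset N.T) : N.postM (U + V) = N.postM U + N.postM V := by
  simp [postM]
@[simp] lemma srcM_add (U V : Multiset N.T) : N.srcM (U + V) = N.srcM U + N.srcM V := by
  simp [srcM]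
@[simp] lemma tgtM_add (U V : Multiset N.T) : N.tgtM (U + V) = N.tgtM U + N.tgtM V := by
  simp [tgtM]

@[simp] lemma preM_cons (t : N.T) (U : Multiset N.T) :
    N.preM (t ::ₘ U) = N.pre t + N.preM U := by simp [preM]
@[simp] lemma postM_cons (t : N.T) (U : Multiset N.T) :
    N.postM (t ::ₘ U) = N.post t + N.postM U := by simp [postM]
@[simp] lemma srcM_cons (t : N.T) (U : Multiset N.T) :
    N.srcM (t ::ₘ U) = N.src t + N.srcM U := by simp [srcM]
@[simp] lemma tgtM_cons (t : N.T) (U : Multiset N.T) :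
    N.tgtM (t ::ₘ U) = N.tgt t + N.tgtM U := by simp [tgtM]

end linadd

section mmk
variable {A B : Type}

open Classical in
lemma count_mmk_inl (X : Multiset A) (Y : Multiset B) (a : A) :
    (mmk X Y).count (Sum.inl a) = X.count a := by
  classical
  simp [mmk, Multiset.count_map_eq_count' _ _ Sum.inl_injective]

open Classical in
lemma count_mmk_inr (X : Multiset A) (Y : Multiset B) (b : B) :
    (mmk X Y).count (Sum.inr b) = Y.count b := by
  classical
  simp [mmk, Multiset.count_map_eq_count' _ _ Sum.inr_injective]

lemma mmk_le_mmk {a c : Multiset A} {b d : Multiset B} :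
    mmk a b ≤ mmk c d ↔ a ≤ c ∧ b ≤ d := by
  classical
  constructor
  · intro h
    rw [Multiset.le_iff_count] at h
    constructor <;> rw [Multiset.le_iff_count] <;> intro x
    · have := h (Sum.inl x); simpa [count_mmk_inl] using this
    · have := h (Sum.inr x); simpa [count_mmk_inr] using this
  · rintro ⟨h1, h2⟩
    rw [Multiset.le_iff_count]; intro x
    cases x with
    | inl a => simpa [count_mmk_inl] using Multiset.le_iff_count.mp h1 a
    | inr b => simpa [count_mmk_inr] using Multiset.le_iff_count.mp h2 b

lemma sub_eq_sub_iff {P : Type} [DecidableEq P] {x y a b : Multiset P}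
    (ha : a ≤ x) (hb : b ≤ y) : x - a = y - b ↔ x + b = y + a := by
  have ha' := Multiset.le_iff_count.mp ha
  have hb' := Multiset.le_iff_count.mp hb
  constructor <;> intro h
  · ext p
    have hp := congrArg (Multiset.count p) h
    have h1 := ha' p
    have h2 := hb' p
    simp [Multiset.count_sub] at hp ⊢
    omega
  · ext p
    have hp := congrArg (Multiset.count p) h
    have h1 := ha' p
    have h2 := hb' p
    simp [Multiset.count_sub] at hp ⊢
    omega

lemma mmk_inj {a c : Multiset A} {b d : Multiset B} :
    mmk a b = mmk c d ↔ a = c ∧ b = d := by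
  classical
  constructor
  · intro h
    constructor <;> ext x
    · have := congrArg (Multiset.count (Sum.inl x)) h
      simpa [count_mmk_inl] using this
    · have := congrArg (Multiset.count (Sum.inr x)) h
      simpa [count_mmk_inr] using this
  · rintro ⟨rfl, rfl⟩; rfl

lemma mmk_add (a c : Multiset A) (b d : Multiset B) :
    mmk a b + mmk c d = mmk (a + c) (b + d) := by
  simp [mmk]; abel

@[simp] lemma mmk_zero : (mmk 0 0 : Multiset (A ⊕ B)) = 0 := rfl

end mmk

lemma chiM_inj {j : ℕ} {A B : Multiset (Fin j)} (h : chiM A = chiM B) : A = B := by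
  ext x
  exact congrFun h x

-- every synchronisation contains a minimal one
lemma exists_minSynch (M : PTNet l m) (N : PTNet m n) :
    ∀ c : ℕ, ∀ (U : Multiset M.T) (V : Multiset N.T),
      Multiset.card U + Multiset.card V ≤ c → Synch M N U V →
      ∃ U₀ V₀, MinSynch M N U₀ V₀ ∧ U₀ ≤ U ∧ V₀ ≤ V := by
  intro c
  induction c with
  | zero =>
    intro U V hc hs
    have hU : U = 0 := Multiset.card_eq_zero.mp (by omega)
    have hV : V = 0 := Multiset.card_eq_zero.mp (by omega)
    exact absurd ⟨hU, hV⟩ hs.1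
  | succ c ih =>
    intro U V hc hs
    by_cases hmin : ∀ U' V', Synch M N U' V' → U' ≤ U → V' ≤ V → U' = U ∧ V' = V
    · exact ⟨U, V, ⟨hs, hmin⟩, le_refl _, le_refl _⟩
    · push_neg at hmin
      obtain ⟨U', V', hs', hU', hV', hne⟩ := hmin
      have hlt : Multiset.card U' + Multiset.card V' < Multiset.card U + Multiset.card V := by
        rcases eq_or_lt_of_le hU' with h | h
        · rcases eq_or_lt_of_le hV' with h2 | h2
          · exact absurd h2 (hne h)
          · have h3 := Multiset.card_lt_card h2
            have h4 : Multiset.card U' = Multiset.card U := by rw [h]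
            omega
        · have h3 := Multiset.card_lt_card h
          have h4 := Multiset.card_le_card hV'
          omega
      obtain ⟨U₀, V₀, hm, h1, h2⟩ := ih U' V' (by omega) hs'
      exact ⟨U₀, V₀, hm, le_trans h1 hU', le_trans h2 hV'⟩

lemma synch_decompose (M : PTNet l m) (N : PTNet m n) :
    ∀ c : ℕ, ∀ (U : Multiset M.T) (V : Multiset N.T),
      Multiset.card U + Multiset.card V ≤ c →
      M.tgtM U = N.srcM V →
      ∃ W : Multiset (M.comp N).T,
        (M.comp N).preM W = mmk (M.preM U) (N.preM V) ∧
        (M.comp N).postM W = mmk (M.postM U) (N.postM V) ∧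
        (M.comp N).srcM W = M.srcM U ∧
        (M.comp N).tgtM W = N.tgtM V := by
  classical
  intro c
  induction c with
  | zero =>
    intro U V hc _
    have hU : U = 0 := Multiset.card_eq_zero.mp (by omega)
    have hV : V = 0 := Multiset.card_eq_zero.mp (by omega)
    subst hU; subst hV
    exact ⟨0, rfl, rfl, by simp, by simp⟩
  | succ c ih =>
    intro U V hc hsync
    by_cases h0 : U = 0 ∧ V = 0
    · obtain ⟨rfl, rfl⟩ := h0
      exact ⟨0, rfl, rfl, by simp, by simp⟩
    · have hs : Synch M N U V := ⟨h0, hsync⟩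
      obtain ⟨U₀, V₀, hmin, hU₀, hV₀⟩ :=
        exists_minSynch M N (Multiset.card U + Multiset.card V) U V le_rfl hs
      set t : (M.comp N).T := ⟨footOf M N U₀ V₀, U₀, V₀, hmin, rfl⟩ with ht
      have hne : ¬(U₀ = 0 ∧ V₀ = 0) := hmin.1.1
      have hcard : 1 ≤ Multiset.card U₀ + Multiset.card V₀ := by
        by_contra h
        push_neg at h
        exact hne ⟨Multiset.card_eq_zero.mp (by omega), Multiset.card_eq_zero.mp (by omega)⟩
      have hU1 : U₀ + (U - U₀) = U := by
        rw [add_comm]; exact tsub_add_cancel_of_le hU₀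
      have hV1 : V₀ + (V - V₀) = V := by rw [add_comm]; exact tsub_add_cancel_of_le hV₀
      have hsync' : M.tgtM (U - U₀) = N.srcM (V - V₀) := by
        have e1 : M.tgtM U₀ + M.tgtM (U - U₀) = M.tgtM U := by rw [← tgtM_add, hU1]
        have e2 : N.srcM V₀ + N.srcM (V - V₀) = N.srcM V := by rw [← srcM_add, hV1]
        have e3 : M.tgtM U₀ = N.srcM V₀ := hmin.1.2
        have := e1.trans hsync |>.trans e2.symm
        rw [e3] at this
        exact add_left_cancel this
      have hcards : Multiset.card (U - U₀) + Multiset.card (V - V₀) ≤ c := by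
        have c1 : Multiset.card U₀ + Multiset.card (U - U₀) = Multiset.card U := by
          rw [← Multiset.card_add, hU1]
        have c2 : Multiset.card V₀ + Multiset.card (V - V₀) = Multiset.card V := by
          rw [← Multiset.card_add, hV1]
        omega
      obtain ⟨W, hw1, hw2, hw3, hw4⟩ := ih (U - U₀) (V - V₀) hcards hsync'
      refine ⟨t ::ₘ W, ?_, ?_, ?_, ?_⟩
      · rw [preM_cons, hw1]
        show (footOf M N U₀ V₀).1 + _ = _
        rw [footOf]
        show mmk (M.preM U₀) (N.preM V₀) + _ = _
        rw [mmk_add, ← preM_add, ← preM_add, hU1, hV1]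
      · rw [postM_cons, hw2]
        show (footOf M N U₀ V₀).2.1 + _ = _
        rw [footOf]
        show mmk (M.postM U₀) (N.postM V₀) + _ = _
        rw [mmk_add, ← postM_add, ← postM_add, hU1, hV1]
      · rw [srcM_cons, hw3]
        show M.srcM U₀ + _ = _
        rw [← srcM_add, hU1]
      · rw [tgtM_cons, hw4]
        show N.tgtM V₀ + _ = _
        rw [← tgtM_add, hV1]

-- forward: every multiset of composite transitions comes from a pair (U, V)
lemma comp_decomp (M : PTNet l m) (N : PTNet m n) (W : Multiset (M.comp N).T) :
    ∃ (U : Multiset M.T) (V : Multiset N.T),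
      M.tgtM U = N.srcM V ∧
      (M.comp N).preM W = mmk (M.preM U) (N.preM V) ∧
      (M.comp N).postM W = mmk (M.postM U) (N.postM V) ∧
      (M.comp N).srcM W = M.srcM U ∧
      (M.comp N).tgtM W = N.tgtM V := by
  induction W using Multiset.induction with
  | empty => exact ⟨0, 0, by simp, rfl, rfl, by simp, by simp⟩
  | cons t W ih =>
    obtain ⟨U, V, h0, h1, h2, h3, h4⟩ := ih
    obtain ⟨Ut, Vt, hmin, hfoot⟩ := t.2
    refine ⟨Ut + U, Vt + V, ?_, ?_, ?_, ?_, ?_⟩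
    · rw [tgtM_add, srcM_add, h0, hmin.1.2]
    · rw [preM_cons, h1, preM_add, preM_add, ← mmk_add]
      congr 1
      show t.1.1 = _
      rw [← hfoot]; rfl
    · rw [postM_cons, h2, postM_add, postM_add, ← mmk_add]
      congr 1
      show t.1.2.1 = _
      rw [← hfoot]; rfl
    · rw [srcM_cons, h3, srcM_add]
      congr 1
      show t.1.2.2.1 = _
      rw [← hfoot]; rfl
    · rw [tgtM_cons, h4, tgtM_add]
      congr 1
      show t.1.2.2.2 = _
      rw [← hfoot]; rfl

end PTNet

/-- Theorem `ptnetdecomposition` (i): the strong labelled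
semantics of the composite P/T net `M;N` decomposes. -/
theorem stmt5 {k n m : ℕ} (M : PTNet k n) (N : PTNet n m)
    (hM : M.Valid) (hN : N.Valid)
    (X X' : Multiset M.P) (Y Y' : Multiset N.P)
    (α : Fin k → ℕ) (β : Fin m → ℕ) :
    (M.comp N).SLts (PTNet.mmk X Y) α β (PTNet.mmk X' Y') ↔
      ∃ γ : Fin n → ℕ, M.SLts X α γ X' ∧ N.SLts Y γ β Y' := by
  classical
  constructor
  · rintro ⟨W, ⟨hpre, hpost, hsub⟩, hα, hβ⟩
    obtain ⟨U, V, h0, h1, h2, h3, h4⟩ := PTNet.comp_decomp M N W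
    rw [h1] at hpre hsub
    rw [h2] at hpost hsub
    have hsub' := (@PTNet.sub_eq_sub_iff _ (Classical.decEq (M.comp N).P) _ _ _ _
        hpre hpost).mp hsub
    replace hsub' : PTNet.mmk X Y + PTNet.mmk (M.postM U) (N.postM V) = PTNet.mmk X' Y' + PTNet.mmk (M.preM U) (N.preM V) := hsub'
    rw [PTNet.mmk_add, PTNet.mmk_add] at hsub'
    obtain ⟨hpre1, hpre2⟩ := PTNet.mmk_le_mmk.mp hpre
    obtain ⟨hpost1, hpost2⟩ := PTNet.mmk_le_mmk.mp hpost
    obtain ⟨hsub1, hsub2⟩ := PTNet.mmk_inj.mp hsub'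
    refine ⟨PTNet.chiM (M.tgtM U), ⟨U, ⟨hpre1, hpost1,
        (@PTNet.sub_eq_sub_iff _ (Classical.decEq M.P) _ _ _ _ hpre1 hpost1).mpr hsub1⟩,
        by rw [hα, h3], rfl⟩,
      ⟨V, ⟨hpre2, hpost2,
        (@PTNet.sub_eq_sub_iff _ (Classical.decEq N.P) _ _ _ _ hpre2 hpost2).mpr hsub2⟩,
        by rw [h0], by rw [hβ, h4]⟩⟩
  · rintro ⟨γ, ⟨U, ⟨u1, u2, u3⟩, hα, hγ⟩, ⟨V, ⟨v1, v2, v3⟩, hγ', hβ⟩⟩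
    have hsync : M.tgtM U = N.srcM V := PTNet.chiM_inj (hγ ▸ hγ')
    obtain ⟨W, h1, h2, h3, h4⟩ :=
      PTNet.synch_decompose M N (Multiset.card U + Multiset.card V) U V le_rfl hsync
    refine ⟨W, ⟨?_, ?_, ?_⟩, by rw [hα, h3], by rw [hβ, h4]⟩
    · rw [h1]; exact PTNet.mmk_le_mmk.mpr ⟨u1, v1⟩
    · rw [h2]; exact PTNet.mmk_le_mmk.mpr ⟨u2, v2⟩
    · have hu := (@PTNet.sub_eq_sub_iff _ (Classical.decEq M.P) _ _ _ _ u1 u2).mp u3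
      have hv := (@PTNet.sub_eq_sub_iff _ (Classical.decEq N.P) _ _ _ _ v1 v2).mp v3
      rw [h1, h2]
      refine (@PTNet.sub_eq_sub_iff _ (Classical.decEq (M.comp N).P) _ _ _ _
        (PTNet.mmk_le_mmk.mpr ⟨u1, v1⟩) (PTNet.mmk_le_mmk.mpr ⟨u2, v2⟩)).mpr ?_
      show PTNet.mmk X Y + PTNet.mmk (M.postM U) (N.postM V) = PTNet.mmk X' Y' + PTNet.mmk (M.preM U) (N.preM V)
      rw [PTNet.mmk_add, PTNet.mmk_add]
      exact PTNet.mmk_inj.mpr ⟨hu, hv⟩
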